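/- The alternating group A4 admits a symmetric subset S = {(13)(24), (14)(23), (123), (132)} such that the Cayley graph Cay(A4, S) has an irrational eigenvalue (namely (−1 ± √17)/2). -/

import Mathlib

open Classical in
/-- Adjacency matrix of the Cayley graph `Cay(G,S)`: `x ~ y` iff `x * y⁻¹ ∈ S`. -/
noncomputable def cayleyMatrix {G : Type*} [Group G] (S : Set G) : Matrix G G ℝ :=
  fun x y => if x * y⁻¹ ∈ S then 1 else 0

/-- All eigenvalues of the real matrix `A` are integers. -/
noncomputable def isIntegralMatrix {n : Type*} [Finite n] (A : Matrix n n ℝ) : Prop :=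
  letI := Fintype.ofFinite n
  letI := Classical.decEq n
  ∀ μ : ℝ, Module.End.HasEigenvalue (Matrix.toLin' A) μ → ∃ z : ℤ, μ = (z : ℝ)


open Equiv

namespace A4Aux

def pa : Perm (Fin 4) := swap 0 2 * swap 1 3
def pb : Perm (Fin 4) := swap 0 3 * swap 1 2
def pc : Perm (Fin 4) := swap 0 2 * swap 0 1

lemma pa_mem : pa ∈ alternatingGroup (Fin 4) := by
  rw [Equiv.Perm.mem_alternatingGroup]; decide
lemma pb_mem : pb ∈ alternatingGroup (Fin 4) := by
  rw [Equiv.Perm.mem_alternatingGroup]; decide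
lemma pc_mem : pc ∈ alternatingGroup (Fin 4) := by
  rw [Equiv.Perm.mem_alternatingGroup]; decide

def A : alternatingGroup (Fin 4) := ⟨pa, pa_mem⟩
def B : alternatingGroup (Fin 4) := ⟨pb, pb_mem⟩
def C : alternatingGroup (Fin 4) := ⟨pc, pc_mem⟩

def S : Set (alternatingGroup (Fin 4)) := {A, B, C, C⁻¹}

noncomputable def ev : ℝ := (-1 + Real.sqrt 17) / 2

noncomputable def u : Fin 4 → ℝ := ![4 - 3*ev, 4 - 3*ev, 4*ev - 8, 2*ev]

noncomputable def f : alternatingGroup (Fin 4) → ℝ := fun g => u ((g : Perm (Fin 4)) 0)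

lemma sq17 : Real.sqrt 17 ^ 2 = 17 := Real.sq_sqrt (by norm_num)

lemma ev_sq : ev ^ 2 = 4 - ev := by
  have := sq17
  unfold ev
  nlinarith [this]

lemma key_vec (i : Fin 4) : u (pa i) + u (pb i) + u (pc i) + u (pc⁻¹ i) = ev * u i := by
  have h := ev_sq
  fin_cases i
  · show u (pa 0) + u (pb 0) + u (pc 0) + u (pc⁻¹ 0) = ev * u 0
    rw [show pa 0 = 2 from by decide, show pb 0 = 3 from by decide,
      show pc 0 = 1 from by decide, show pc⁻¹ 0 = 2 from by decide]
    simp [u]; nlinarith [h]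
  · show u (pa 1) + u (pb 1) + u (pc 1) + u (pc⁻¹ 1) = ev * u 1
    rw [show pa 1 = 3 from by decide, show pb 1 = 2 from by decide,
      show pc 1 = 2 from by decide, show pc⁻¹ 1 = 0 from by decide]
    simp [u]; nlinarith [h]
  · show u (pa 2) + u (pb 2) + u (pc 2) + u (pc⁻¹ 2) = ev * u 2
    rw [show pa 2 = 0 from by decide, show pb 2 = 1 from by decide,
      show pc 2 = 0 from by decide, show pc⁻¹ 2 = 1 from by decide]
    simp [u]; nlinarith [h]
  · show u (pa 3) + u (pb 3) + u (pc 3) + u (pc⁻¹ 3) = ev * u 3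
    rw [show pa 3 = 1 from by decide, show pb 3 = 0 from by decide,
      show pc 3 = 3 from by decide, show pc⁻¹ 3 = 3 from by decide]
    simp [u]; nlinarith [h]

end A4Aux

namespace A4Aux

abbrev G := alternatingGroup (Fin 4)

lemma cancel_iff (s x y : G) : x * y⁻¹ = s ↔ y = s⁻¹ * x := by
  constructor
  · rintro rfl; group
  · rintro rfl; group

lemma A_inv : A⁻¹ = A := by decide
lemma B_inv : B⁻¹ = B := by decide

lemma mem_S_iff (x y : G) :
    x * y⁻¹ ∈ S ↔ (y = A * x ∨ y = B * x ∨ y = C⁻¹ * x ∨ y = C * x) := by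
  simp only [S, Set.mem_insert_iff, Set.mem_singleton_iff, cancel_iff]
  rw [A_inv, B_inv, inv_inv]

lemma distinct : A ≠ B ∧ A ≠ C⁻¹ ∧ A ≠ C ∧ B ≠ C⁻¹ ∧ B ≠ C ∧ (C⁻¹ : G) ≠ C := by decide

lemma mulVec_f (x : G) :
    (cayleyMatrix S).mulVec f x = f (A*x) + f (B*x) + f (C⁻¹*x) + f (C*x) := by
  obtain ⟨d1, d2, d3, d4, d5, d6⟩ := distinct
  have e1 : A*x ≠ B*x := fun h => d1 (mul_right_cancel h)
  have e2 : A*x ≠ C⁻¹*x := fun h => d2 (mul_right_cancel h)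
  have e3 : A*x ≠ C*x := fun h => d3 (mul_right_cancel h)
  have e4 : B*x ≠ C⁻¹*x := fun h => d4 (mul_right_cancel h)
  have e5 : B*x ≠ C*x := fun h => d5 (mul_right_cancel h)
  have e6 : C⁻¹*x ≠ C*x := fun h => d6 (mul_right_cancel h)
  have step : ∀ y : G, cayleyMatrix S x y =
      if y ∈ ({A*x, B*x, C⁻¹*x, C*x} : Finset G) then (1:ℝ) else 0 := by
    intro y
    have hiff : (x * y⁻¹ ∈ S) ↔ (y ∈ ({A*x, B*x, C⁻¹*x, C*x} : Finset G)) := by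
      rw [mem_S_iff]; simp
    unfold cayleyMatrix
    simp only [hiff]
  unfold Matrix.mulVec dotProduct
  simp only [step, ite_mul, one_mul, zero_mul]
  rw [Finset.sum_ite_mem, Finset.univ_inter]
  rw [Finset.sum_insert (by simp [e1, e2, e3]),
    Finset.sum_insert (by simp [e4, e5]),
    Finset.sum_insert (by simp [e6]), Finset.sum_singleton]
  ring

lemma f_apply_mul (g x : G) : f (g * x) = u ((g : Perm (Fin 4)) ((x : Perm (Fin 4)) 0)) := rfl

lemma eigen_eq : (cayleyMatrix S).mulVec f = ev • f := by
  funext x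
  rw [mulVec_f]
  have := key_vec ((x : Perm (Fin 4)) 0)
  simp only [Pi.smul_apply, smul_eq_mul]
  have h1 : f (A*x) + f (B*x) + f (C⁻¹*x) + f (C*x)
      = u (pa ((x : Perm (Fin 4)) 0)) + u (pb ((x : Perm (Fin 4)) 0))
        + u (pc⁻¹ ((x : Perm (Fin 4)) 0)) + u (pc ((x : Perm (Fin 4)) 0)) := rfl
  have h2 : f x = u ((x : Perm (Fin 4)) 0) := rfl
  rw [h1, h2]
  linarith [this]

lemma f_ne_zero : f ≠ 0 := by
  intro h0
  have h1 : f 1 = 0 := by rw [h0]; rfl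
  have h2 : f 1 = 4 - 3 * ev := rfl
  rw [h2] at h1
  nlinarith [ev_sq, h1]

lemma hasEig : Module.End.HasEigenvalue (Matrix.toLin' (cayleyMatrix S)) ev := by
  apply Module.End.hasEigenvalue_of_hasEigenvector (x := f)
  constructor
  · rw [Module.End.mem_eigenspace_iff, Matrix.toLin'_apply, eigen_eq]
  · exact f_ne_zero

end A4Aux

open Equiv in
theorem alternating_four_irrational_eigenvalue :
    ∃ S : Set (alternatingGroup (Fin 4)),
      (fun g : alternatingGroup (Fin 4) => (g : Perm (Fin 4))) '' S =
        {swap 0 2 * swap 1 3, swap 0 3 * swap 1 2,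
          swap 0 2 * swap 0 1, (swap 0 2 * swap 0 1)⁻¹} ∧
      (∀ s ∈ S, s⁻¹ ∈ S) ∧ (1 : alternatingGroup (Fin 4)) ∉ S ∧
      Irrational ((-1 + Real.sqrt 17) / 2) ∧
      Module.End.HasEigenvalue (Matrix.toLin' (cayleyMatrix S))
        ((-1 + Real.sqrt 17) / 2) := by
  refine ⟨A4Aux.S, ?_, ?_, ?_, ?_, A4Aux.hasEig⟩
  · simp only [A4Aux.S, Set.image_insert_eq, Set.image_singleton]
    rfl
  · intro s hs
    simp only [A4Aux.S, Set.mem_insert_iff, Set.mem_singleton_iff] at hs ⊢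
    rcases hs with rfl | rfl | rfl | rfl <;> decide
  · simp only [A4Aux.S, Set.mem_insert_iff, Set.mem_singleton_iff]
    decide
  · have h17 : Irrational (Real.sqrt 17) :=
      (by norm_num : Nat.Prime 17).irrational_sqrt
    have h1 : Irrational ((-1 : ℚ) + Real.sqrt 17) := h17.ratCast_add (-1)
    have h2 : Irrational (((-1 : ℚ) + Real.sqrt 17) / (2 : ℕ)) :=
      h1.div_natCast (by norm_num)
    convert h2 using 2 <;> norm_num
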